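/- Let X be [0,1], [0,∞), (−∞,∞) or 𝕋 = [0,1]/{0,1}, and let I = C(X)⊗B (X compact) or C_0(X)⊗B (X noncompact), with M(I) = C_b(X, M(B)_s). Let x_1 < ⋯ < x_n be interior partition points dividing X into closed subintervals X_0, …, X_n, and let f_i ∈ C_b(X_i, M(B)_s) satisfy f_i(x_i) − f_{i−1}(x_i) ∈ B for i = 1, …, n (and f_0(x_0) − f_n(x_0) ∈ B, where x_0 = 0 = 1, when X = 𝕋). Then the tuple (f_0, …, f_n) determines a coset in the corona algebra C(I) = M(I)/I, and this coset consists exactly of the functions f ∈ M(I) such that f − f_i ∈ C(X_i)⊗B for every i and f − f_i vanishes in norm at any infinite endpoint of X_i. -/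

import Mathlib

/-!
STATEMENT 5: Let `X` be `[0,1]`, `[0,∞)`, `(−∞,∞)` or `𝕋 = [0,1]/{0,1}`, and let
`I = C(X)⊗B` (`X` compact) or `C₀(X)⊗B` (`X` noncompact), with `M(I) = C_b(X, M(B)_s)`.
Let `x₁ < ⋯ < xₙ` be interior partition points dividing `X` into closed subintervals
`X₀, …, Xₙ`, and let `fᵢ ∈ C_b(Xᵢ, M(B)_s)` satisfy `fᵢ(xᵢ) − f_{i−1}(xᵢ) ∈ B` for
`i = 1, …, n` (and `f₀(x₀) − fₙ(x₀) ∈ B`, where `x₀ = 0 = 1`, when `X = 𝕋`).  Then the tuple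
`(f₀, …, fₙ)` determines a coset in the corona algebra `C(I) = M(I)/I`, and this coset
consists exactly of the functions `f ∈ M(I)` such that `f − fᵢ ∈ C(Xᵢ)⊗B` for every `i` and
`f − fᵢ` vanishes in norm at any infinite endpoint of `Xᵢ`.

Modeling: `M(B)` is the double centralizer algebra `𝓜(ℂ, B)`, and `B ⊆ M(B)` is the range of
the canonical embedding.  The four spaces `X` are encoded by `SpaceCase`, realizing `X` as a
subset of `ℝ` — the circle as `[0,1]` with endpoint values identified (matching-value
conditions at `0 = 1`).  Elements of `M(I) = C_b(X, M(B)_s)` are bounded functions `X → M(B)`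
continuous for the strict topology; elements of `I` are norm-continuous `B`-valued functions
vanishing at infinity.  "`(f₀,…,fₙ)` determines a coset, consisting exactly of …" is expressed
by: the set `F` of functions `f ∈ M(I)` agreeing with each `fᵢ` modulo `C(Xᵢ)⊗B` (with the
vanishing conditions) is nonempty, and for `f ∈ F` and any `g ∈ M(I)` one has `g ∈ F`
iff `f − g ∈ I`.  Stability of `B` is encoded by the existence of a sequence of isometries of
`M(B)` with mutually orthogonal ranges summing strictly to `1`.
-/

open MultiplierAlgebra Filter Topology

/-- The canonical ideal `B` inside its multiplier algebra `𝓜(ℂ, B)`. -/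
def canonicalIdeal (B : Type*) [NonUnitalCStarAlgebra B] : Set 𝓜(ℂ, B) :=
  Set.range (DoubleCentralizer.coe ℂ : B → 𝓜(ℂ, B))

/-- Stability of `B`: there are isometries of `M(B)` with mutually orthogonal ranges summing
strictly to `1`. -/
def StableCStar (B : Type*) [NonUnitalCStarAlgebra B] : Prop :=
  ∃ S : ℕ → 𝓜(ℂ, B),
    (∀ i, star (S i) * S i = 1) ∧
    (∀ i j, i ≠ j → star (S i) * S j = 0) ∧
    (∀ b : B,
      Tendsto (fun N => ‖((1 : 𝓜(ℂ, B)) - ∑ i ∈ Finset.range N, S i * star (S i)) *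
        DoubleCentralizer.coe ℂ b‖) atTop (nhds 0) ∧
      Tendsto (fun N => ‖DoubleCentralizer.coe ℂ b *
        ((1 : 𝓜(ℂ, B)) - ∑ i ∈ Finset.range N, S i * star (S i))‖) atTop (nhds 0))

/-- The four base spaces: `[0,1]`, `[0,∞)`, `(−∞,∞)`, and the circle `𝕋 = [0,1]/{0,1}`. -/
inductive SpaceCase | interval | halfLine | line | circle

/-- The subset of `ℝ` realizing `X` (the circle via `[0,1]` with endpoints identified). -/
def caseSet : SpaceCase → Set ℝ
  | .interval => Set.Icc 0 1
  | .halfLine => Set.Ici 0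
  | .line => Set.univ
  | .circle => Set.Icc 0 1

/-- Left endpoint of `X` in the extended reals. -/
noncomputable def leftEnd : SpaceCase → EReal
  | .line => ⊥
  | _ => (0 : EReal)

/-- Right endpoint of `X` in the extended reals. -/
noncomputable def rightEnd : SpaceCase → EReal
  | .interval => (1 : EReal)
  | .circle => (1 : EReal)
  | _ => ⊤

/-- The closed subinterval `Xᵢ` determined by partition points `x 1 < ⋯ < x n`. -/
def subInt (c : SpaceCase) (n : ℕ) (x : ℕ → ℝ) (i : ℕ) : Set ℝ :=
  {t : ℝ | (if i = 0 then leftEnd c else (x i : EReal)) ≤ (t : EReal) ∧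
           (t : EReal) ≤ (if i = n then rightEnd c else (x (i + 1) : EReal))}

/-- The points `x 1 < ⋯ < x n` are increasing and interior to `X`. -/
def ValidPartition (c : SpaceCase) (n : ℕ) (x : ℕ → ℝ) : Prop :=
  (∀ i, 1 ≤ i → i < n → x i < x (i + 1)) ∧
  (∀ i, 1 ≤ i → i ≤ n → leftEnd c < (x i : EReal) ∧ (x i : EReal) < rightEnd c)

/-- Continuity of `F : ℝ → M(B)` on `s` for the strict topology of `𝓜(ℂ, B)`. -/
def StrictlyCtsOn {B : Type*} [NonUnitalCStarAlgebra B]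
    (F : ℝ → 𝓜(ℂ, B)) (s : Set ℝ) : Prop :=
  ∀ b : B,
    ContinuousOn (fun t => F t * DoubleCentralizer.coe ℂ b) s ∧
    ContinuousOn (fun t => DoubleCentralizer.coe ℂ b * F t) s

/-- Membership in `M(I) = C_b(X, M(B)_s)`: bounded, strictly continuous (and, for the circle,
matching values at the identified endpoints `0 = 1`). -/
def MemMult {B : Type*} [NonUnitalCStarAlgebra B] (c : SpaceCase)
    (f : ℝ → 𝓜(ℂ, B)) : Prop :=
  StrictlyCtsOn f (caseSet c) ∧
  (∃ C : ℝ, ∀ t ∈ caseSet c, ‖f t‖ ≤ C) ∧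
  (c = SpaceCase.circle → f 0 = f 1)

/-- Membership in `I` (`= C(X)⊗B` or `C₀(X)⊗B`): given by a norm-continuous `B`-valued
function, vanishing in norm at the infinite endpoints, matching at `0 = 1` for the circle. -/
def MemIdeal {B : Type*} [NonUnitalCStarAlgebra B] (c : SpaceCase)
    (f : ℝ → 𝓜(ℂ, B)) : Prop :=
  ∃ d : ℝ → B, ContinuousOn d (caseSet c) ∧
    (∀ t ∈ caseSet c, f t = DoubleCentralizer.coe ℂ (d t)) ∧
    (c = SpaceCase.circle → d 0 = d 1) ∧
    (c = SpaceCase.halfLine → Tendsto (fun t => ‖d t‖) atTop (nhds 0)) ∧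
    (c = SpaceCase.line → Tendsto (fun t => ‖d t‖) atTop (nhds 0) ∧
      Tendsto (fun t => ‖d t‖) atBot (nhds 0))

/-- `f − g ∈ C(Xᵢ)⊗B`, with `f − g` vanishing in norm at any infinite endpoint of `Xᵢ`. -/
def CoherentOn {B : Type*} [NonUnitalCStarAlgebra B] (c : SpaceCase) (n : ℕ) (x : ℕ → ℝ)
    (f g : ℝ → 𝓜(ℂ, B)) (i : ℕ) : Prop :=
  ∃ d : ℝ → B, ContinuousOn d (subInt c n x i) ∧
    (∀ t ∈ subInt c n x i, f t - g t = DoubleCentralizer.coe ℂ (d t)) ∧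
    ((c = SpaceCase.halfLine ∨ c = SpaceCase.line) → i = n →
      Tendsto (fun t => ‖d t‖) atTop (nhds 0)) ∧
    (c = SpaceCase.line → i = 0 → Tendsto (fun t => ‖d t‖) atBot (nhds 0))

/-! ### Auxiliary material for the proof -/

noncomputable section Stmt5Aux

open DoubleCentralizer

namespace Stmt5Proof

variable {B : Type*} [NonUnitalCStarAlgebra B]

lemma norm_coe (b : B) : ‖(DoubleCentralizer.coe ℂ b : 𝓜(ℂ, B))‖ = ‖b‖ := by
  rw [← DoubleCentralizer.norm_fst]
  exact ContinuousLinearMap.opNorm_mul_apply ℂ B b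

lemma coe_hom_eq : ⇑(DoubleCentralizer.coeHom (𝕜 := ℂ) (A := B)) = DoubleCentralizer.coe ℂ := rfl

lemma coe_sub (a b : B) :
    (DoubleCentralizer.coe ℂ (a - b) : 𝓜(ℂ, B)) =
      DoubleCentralizer.coe ℂ a - DoubleCentralizer.coe ℂ b := by
  rw [← coe_hom_eq]; exact map_sub _ a b

lemma coe_add (a b : B) :
    (DoubleCentralizer.coe ℂ (a + b) : 𝓜(ℂ, B)) =
      DoubleCentralizer.coe ℂ a + DoubleCentralizer.coe ℂ b := by
  rw [← coe_hom_eq]; exact map_add _ a b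

lemma coe_neg (a : B) :
    (DoubleCentralizer.coe ℂ (-a) : 𝓜(ℂ, B)) = -DoubleCentralizer.coe ℂ a := by
  rw [← coe_hom_eq]; exact map_neg _ a

lemma coe_zero : (DoubleCentralizer.coe ℂ (0 : B) : 𝓜(ℂ, B)) = 0 := by
  rw [← coe_hom_eq]; exact map_zero _

lemma coe_inj : Function.Injective (DoubleCentralizer.coe ℂ : B → 𝓜(ℂ, B)) := by
  intro a b h
  have h2 : ‖(DoubleCentralizer.coe ℂ (a - b) : 𝓜(ℂ, B))‖ = 0 := by
    rw [coe_sub, h, sub_self, norm_zero]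
  rw [norm_coe] at h2
  exact sub_eq_zero.mp (norm_eq_zero.mp h2)

lemma coe_cont : Continuous (DoubleCentralizer.coe ℂ : B → 𝓜(ℂ, B)) := by
  rw [← coe_hom_eq]
  exact (AddMonoidHomClass.isometry_of_norm _ (fun b => norm_coe b)).continuous

lemma subInt_closed (c : SpaceCase) (n : ℕ) (x : ℕ → ℝ) (i : ℕ) :
    IsClosed (subInt c n x i) := by
  have : subInt c n x i = ((↑) : ℝ → EReal) ⁻¹' (Set.Icc
      (if i = 0 then leftEnd c else (x i : EReal))
      (if i = n then rightEnd c else (x (i + 1) : EReal))) := rfl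
  rw [this]
  exact isClosed_Icc.preimage continuous_coe_real_ereal

lemma caseSet_eq (c : SpaceCase) :
    caseSet c = {t : ℝ | leftEnd c ≤ (t : EReal) ∧ (t : EReal) ≤ rightEnd c} := by
  cases c <;> ext t <;>
    simp only [caseSet, leftEnd, rightEnd, Set.mem_Icc, Set.mem_Ici, Set.mem_univ,
      Set.mem_setOf_eq, le_top, bot_le, true_and, and_true] <;>
  constructor
  · rintro ⟨h1, h2⟩; exact ⟨by exact_mod_cast h1, by exact_mod_cast h2⟩
  · rintro ⟨h1, h2⟩; exact ⟨by exact_mod_cast h1, by exact_mod_cast h2⟩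
  · intro h; exact_mod_cast h
  · intro h; exact_mod_cast h
  · rintro ⟨h1, h2⟩; exact ⟨by exact_mod_cast h1, by exact_mod_cast h2⟩
  · rintro ⟨h1, h2⟩; exact ⟨by exact_mod_cast h1, by exact_mod_cast h2⟩

lemma glue {E : Type*} [TopologicalSpace E] {f : ℝ → E} {n : ℕ} {S : ℕ → Set ℝ}
    (hcl : ∀ i ≤ n, IsClosed (S i)) (hf : ∀ i ≤ n, ContinuousOn f (S i)) :
    ContinuousOn f (⋃ i ∈ Set.Iic n, S i) := by
  intro t ht
  unfold ContinuousWithinAt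
  rw [nhdsWithin_biUnion (Set.finite_Iic n) S t]
  simp only [Filter.Tendsto, Filter.map_iSup, iSup_le_iff]
  intro i hi
  by_cases hti : t ∈ S i
  · exact hf i hi t hti
  · have : 𝓝[S i] t = ⊥ := by
      rw [← not_neBot, ← mem_closure_iff_nhdsWithin_neBot, (hcl i hi).closure_eq]
      exact hti
    rw [this, Filter.map_bot]
    exact bot_le

lemma x_mono {c : SpaceCase} {n : ℕ} {x : ℕ → ℝ} (hx : ValidPartition c n x) :
    ∀ a b, 1 ≤ a → a < b → b ≤ n → x a < x b := by
  intro a b ha hab hbn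
  induction b with
  | zero => omega
  | succ m ih =>
    rcases Nat.lt_or_ge a m with h | h
    · exact lt_trans (ih (by omega) (by omega)) (hx.1 m (by omega) (by omega))
    · have : a = m := by omega
      subst this
      exact hx.1 a ha (by omega)

end Stmt5Proof

end Stmt5Aux

set_option maxHeartbeats 2000000 in
theorem stmt5 {B : Type*} [NonUnitalCStarAlgebra B] (hB : StableCStar B)
    (c : SpaceCase) (n : ℕ) (x : ℕ → ℝ) (hx : ValidPartition c n x)
    (fS : ℕ → ℝ → 𝓜(ℂ, B))
    -- each `fᵢ ∈ C_b(Xᵢ, M(B)_s)`: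
    (hfS : ∀ i ≤ n, StrictlyCtsOn (fS i) (subInt c n x i) ∧
      ∃ C : ℝ, ∀ t ∈ subInt c n x i, ‖fS i t‖ ≤ C)
    -- `fᵢ(xᵢ) − f_{i−1}(xᵢ) ∈ B` for `i = 1, …, n`:
    (hjump : ∀ i, 1 ≤ i → i ≤ n → fS i (x i) - fS (i - 1) (x i) ∈ canonicalIdeal B)
    -- for the circle, `f₀(x₀) − fₙ(x₀) ∈ B` at the identified endpoint `x₀ = 0 = 1`:
    (hcirc : c = SpaceCase.circle → fS 0 0 - fS n 1 ∈ canonicalIdeal B) :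
    ∃ f : ℝ → 𝓜(ℂ, B),
      (MemMult c f ∧ ∀ i ≤ n, CoherentOn c n x f (fS i) i) ∧
      ∀ g : ℝ → 𝓜(ℂ, B), MemMult c g →
        ((∀ i ≤ n, CoherentOn c n x g (fS i) i) ↔ MemIdeal c (fun t => f t - g t)) := by
  classical
  clear hB
  obtain ⟨hxlt, hxint⟩ := hx
  simp only [canonicalIdeal, Set.mem_range] at hjump hcirc
  choose dj hdj using hjump
  set D : ℕ → B := fun j => if h : 1 ≤ j ∧ j ≤ n then dj j h.1 h.2 else 0 with hD_def
  have hD : ∀ j, 1 ≤ j → j ≤ n →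
      DoubleCentralizer.coe ℂ (D j) = fS j (x j) - fS (j - 1) (x j) := by
    intro j h1 h2
    simp only [hD_def, dif_pos (show 1 ≤ j ∧ j ≤ n from ⟨h1, h2⟩)]
    exact hdj j h1 h2
  set s : ℕ → B := fun i => ∑ j ∈ Finset.range i, D (j + 1) with hs_def
  have hs0 : s 0 = 0 := by simp [hs_def]
  have hssucc : ∀ m, s (m + 1) = s m + D (m + 1) := by
    intro m; simp [hs_def, Finset.sum_range_succ]
  set e : B := if h : c = SpaceCase.circle then -(hcirc h).choose else 0 with he_def
  have he : c = SpaceCase.circle → DoubleCentralizer.coe ℂ e = fS n 1 - fS 0 0 := by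
    intro h
    simp only [he_def, dif_pos h]
    rw [Stmt5Proof.coe_neg, (hcirc h).choose_spec, neg_sub]
  set a : ℝ := if n = 0 then 0 else x n with ha_def
  have ha1 : c = SpaceCase.circle → a < 1 := by
    intro h
    rcases Nat.eq_zero_or_pos n with hn | hn
    · simp [ha_def, hn]
    · have h2 := (hxint n hn le_rfl).2
      rw [h] at h2
      simp only [rightEnd] at h2
      simp only [ha_def, if_neg (by omega : ¬ n = 0)]
      exact_mod_cast h2
  set φ : ℝ → ℝ := fun t => (1 + max 0 (t - x n))⁻¹ with hφ_def
  set ψ : ℝ → ℝ := fun t => max 0 (min 1 ((t - a) / (1 - a))) with hψ_def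
  have hφden : ∀ t, (1 : ℝ) ≤ 1 + max 0 (t - x n) := fun t => by
    have := le_max_left (0:ℝ) (t - x n); linarith
  have hφ01 : ∀ t, 0 ≤ φ t ∧ φ t ≤ 1 := by
    intro t
    constructor
    · positivity
    · rw [hφ_def]
      exact inv_le_one_of_one_le₀ (hφden t)
  have hφxn : φ (x n) = 1 := by simp [hφ_def]
  have hφtop : Filter.Tendsto φ atTop (nhds 0) := by
    have h2 : Filter.Tendsto (fun t : ℝ => max 0 (t - x n)) atTop atTop := by
      apply Filter.tendsto_atTop_mono (fun t => ?_)
        (Filter.tendsto_atTop_add_const_right atTop (-(x n)) Filter.tendsto_id)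
      rw [← sub_eq_add_neg]
      exact le_max_right _ _
    have h1 : Filter.Tendsto (fun t : ℝ => 1 + max 0 (t - x n)) atTop atTop :=
      Filter.tendsto_atTop_add_const_left atTop 1 h2
    have h3 := h1.inv_tendsto_atTop
    exact h3
  have hψ01 : ∀ t, 0 ≤ ψ t ∧ ψ t ≤ 1 := by
    intro t
    refine ⟨le_max_left _ _, ?_⟩
    rw [hψ_def]
    simp only [max_le_iff]
    exact ⟨zero_le_one, min_le_left _ _⟩
  have hψa : ψ a = 0 := by simp [hψ_def]
  have hψ1 : a < 1 → ψ 1 = 1 := by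
    intro h
    simp only [hψ_def]
    rw [div_self (by linarith : (1:ℝ) - a ≠ 0)]
    simp
  have hφcont : Continuous φ := by
    apply Continuous.inv₀
    · exact continuous_const.add (continuous_const.max (continuous_id.sub continuous_const))
    · intro t; have := hφden t; intro h; rw [h] at this; linarith
  have hψcont : Continuous ψ := by
    apply continuous_const.max (continuous_const.min ?_)
    exact (continuous_id.sub continuous_const).div_const _
  set k : ℕ → ℝ → B := fun i t =>
    if i = n then
      (match c with
        | SpaceCase.interval => s n
        | SpaceCase.halfLine => ((φ t : ℂ)) • s n
        | SpaceCase.line => ((φ t : ℂ)) • s n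
        | SpaceCase.circle => s n + ((ψ t : ℂ)) • (e - s n))
    else s i with hk_def
  have hk_lt : ∀ i, ¬ i = n → ∀ t, k i t = s i := by
    intro i h t; simp only [hk_def, if_neg h]
  have hkxn : 1 ≤ n → k n (x n) = s n := by
    intro hn
    simp only [hk_def, if_pos rfl]
    cases c
    · rfl
    · rw [hφxn]; simp
    · rw [hφxn]; simp
    · have : (x n - a) = 0 := by simp [ha_def, if_neg (by omega : ¬ n = 0)]
      have hψxn : ψ (x n) = 0 := by simp only [hψ_def, this, zero_div]; simp
      rw [hψxn]; simp
  have hkcont : ∀ i, Continuous (k i) := by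
    intro i
    simp only [hk_def]
    by_cases h : i = n
    · simp only [if_pos h]
      cases c
      · exact continuous_const
      · exact (Complex.continuous_ofReal.comp hφcont).smul continuous_const
      · exact (Complex.continuous_ofReal.comp hφcont).smul continuous_const
      · exact continuous_const.add ((Complex.continuous_ofReal.comp hψcont).smul continuous_const)
    · simp only [if_neg h]; exact continuous_const
  set K : ℝ := 2 * (∑ j ∈ Finset.range (n+1), ‖s j‖) + ‖e‖ with hK_def
  have hsle : ∀ i ≤ n, ‖s i‖ ≤ ∑ j ∈ Finset.range (n+1), ‖s j‖ := by
    intro i hi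
    exact Finset.single_le_sum (f := fun j => ‖s j‖) (fun j _ => norm_nonneg _)
      (Finset.mem_range.mpr (by omega))
  have hkK : ∀ i ≤ n, ∀ t, ‖k i t‖ ≤ K := by
    intro i hi t
    have hsum : (0:ℝ) ≤ ∑ j ∈ Finset.range (n+1), ‖s j‖ :=
      Finset.sum_nonneg (fun j _ => norm_nonneg _)
    have hsn := hsle n le_rfl
    have hsi := hsle i hi
    by_cases h : i = n
    · simp only [hk_def, if_pos h]
      cases c
      · simp only [hK_def]; have := norm_nonneg e; linarith
      · rw [norm_smul]
        have h1 : ‖((φ t : ℂ))‖ ≤ 1 := by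
          rw [Complex.norm_real, Real.norm_eq_abs, abs_of_nonneg (hφ01 t).1]
          exact (hφ01 t).2
        have h2 : ‖((φ t : ℂ))‖ * ‖s n‖ ≤ ‖s n‖ := by
          nlinarith [norm_nonneg (s n), norm_nonneg ((φ t : ℂ))]
        simp only [hK_def]; have := norm_nonneg e; linarith
      · rw [norm_smul]
        have h1 : ‖((φ t : ℂ))‖ ≤ 1 := by
          rw [Complex.norm_real, Real.norm_eq_abs, abs_of_nonneg (hφ01 t).1]
          exact (hφ01 t).2
        have h2 : ‖((φ t : ℂ))‖ * ‖s n‖ ≤ ‖s n‖ := by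
          nlinarith [norm_nonneg (s n), norm_nonneg ((φ t : ℂ))]
        simp only [hK_def]; have := norm_nonneg e; linarith
      · have h1 : ‖s n + ((ψ t : ℂ)) • (e - s n)‖ ≤ ‖s n‖ + ‖((ψ t : ℂ)) • (e - s n)‖ :=
          norm_add_le _ _
        rw [norm_smul] at h1
        have h2 : ‖((ψ t : ℂ))‖ ≤ 1 := by
          rw [Complex.norm_real, Real.norm_eq_abs, abs_of_nonneg (hψ01 t).1]
          exact (hψ01 t).2
        have h3 : ‖e - s n‖ ≤ ‖e‖ + ‖s n‖ := norm_sub_le _ _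
        have h4 : ‖((ψ t : ℂ))‖ * ‖e - s n‖ ≤ ‖e‖ + ‖s n‖ := by
          nlinarith [norm_nonneg (e - s n), norm_nonneg ((ψ t : ℂ))]
        simp only [hK_def]; linarith
    · rw [hk_lt i h t]
      simp only [hK_def]; have := norm_nonneg e; linarith
  have hkTop : (c = SpaceCase.halfLine ∨ c = SpaceCase.line) →
      Filter.Tendsto (fun t => ‖k n t‖) atTop (nhds 0) := by
    intro hc
    have hform : ∀ t, ‖k n t‖ = ‖((φ t : ℂ))‖ * ‖s n‖ := by
      intro t
      rcases hc with h | h <;> subst h <;>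
        simp only [hk_def, if_pos rfl] <;> rw [norm_smul]
    simp only [hform]
    have h1 : Filter.Tendsto (fun t => ‖((φ t : ℂ))‖) atTop (nhds 0) := by
      have : ∀ t, ‖((φ t : ℂ))‖ = |φ t| := fun t => by
        rw [Complex.norm_real, Real.norm_eq_abs]
      simp only [this]
      have := hφtop.abs
      simpa using this
    have := h1.mul_const ‖s n‖
    simpa using this
  have hk0line : c = SpaceCase.line → ∀ t, k 0 t = 0 := by
    intro hc t
    by_cases h : (0:ℕ) = n
    · subst hc
      have hn0 : n = 0 := h.symm
      subst hn0
      simp only [hk_def, if_pos rfl]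
      rw [hs0]
      simp
    · rw [hk_lt 0 h t, hs0]
  have hk00 : c = SpaceCase.circle → k 0 0 = 0 := by
    intro hc
    by_cases h : (0:ℕ) = n
    · subst hc
      have hn0 : n = 0 := h.symm
      subst hn0
      simp only [hk_def, if_pos rfl]
      have ha0 : a = 0 := by simp [ha_def]
      have hψ00 : ψ 0 = 0 := by rw [← ha0]; exact hψa
      rw [hψ00, hs0]
      simp
    · rw [hk_lt 0 h 0, hs0]
  have hkn1 : c = SpaceCase.circle → k n 1 = e := by
    intro hc
    have hψ1' := hψ1 (ha1 hc)
    subst hc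
    simp only [hk_def, if_pos rfl, hψ1']
    simp
  set idx : ℝ → ℕ := fun t => Nat.findGreatest (fun i => x i ≤ t) n with hidx_def
  have hidxle : ∀ t, idx t ≤ n := fun t => Nat.findGreatest_le n
  have hidx_spec : ∀ t, (idx t ≠ 0 → x (idx t) ≤ t) ∧
      ∀ j, idx t < j → j ≤ n → ¬ x j ≤ t := by
    intro t
    have h : Nat.findGreatest (fun i => x i ≤ t) n = idx t := (congrFun hidx_def t).symm
    obtain ⟨h1, h2, h3⟩ := Nat.findGreatest_eq_iff.mp h
    exact ⟨h2, fun j hj hjn => h3 hj hjn⟩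
  have hidxP : ∀ t, idx t ≠ 0 → x (idx t) ≤ t := fun t => (hidx_spec t).1
  have hidxG : ∀ t j, idx t < j → j ≤ n → ¬ x j ≤ t := fun t => (hidx_spec t).2
  have hidxmem : ∀ t ∈ caseSet c, t ∈ subInt c n x (idx t) := by
    intro t ht
    rw [Stmt5Proof.caseSet_eq] at ht
    constructor
    · by_cases h0 : idx t = 0
      · rw [if_pos h0]; exact ht.1
      · rw [if_neg h0]; exact_mod_cast hidxP t h0
    · by_cases hn : idx t = n
      · rw [if_pos hn]; exact ht.2
      · rw [if_neg hn]
        have hle := hidxle t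
        have := hidxG t (idx t + 1) (lt_add_one _) (by omega)
        exact_mod_cast le_of_lt (not_le.mp this)
  have hsubsub : ∀ i ≤ n, subInt c n x i ⊆ caseSet c := by
    intro i hi t ht
    rw [Stmt5Proof.caseSet_eq]
    obtain ⟨h1, h2⟩ := ht
    constructor
    · by_cases h0 : i = 0
      · rwa [if_pos h0] at h1
      · rw [if_neg h0] at h1
        exact le_trans (le_of_lt (hxint i (by omega) hi).1) h1
    · by_cases hn : i = n
      · rwa [if_pos hn] at h2
      · rw [if_neg hn] at h2
        exact le_trans h2 (le_of_lt (hxint (i+1) (by omega) (by omega)).2)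
  have hpair : ∀ i j, i < j → j ≤ n → ∀ t, t ∈ subInt c n x i → t ∈ subInt c n x j →
      j = i + 1 ∧ t = x j := by
    intro i j hij hj t hti htj
    obtain ⟨_, h2⟩ := hti
    obtain ⟨h3, _⟩ := htj
    rw [if_neg (by omega : ¬ i = n)] at h2
    rw [if_neg (by omega : ¬ j = 0)] at h3
    have h2' : t ≤ x (i+1) := by exact_mod_cast h2
    have h3' : x j ≤ t := by exact_mod_cast h3
    have hj1 : j = i + 1 := by
      by_contra hne
      have hlt : i + 1 < j := by omega
      have := Stmt5Proof.x_mono ⟨hxlt, hxint⟩ (i+1) j (by omega) hlt hj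
      linarith
    subst hj1
    exact ⟨rfl, le_antisymm h2' h3'⟩
  have hmatch : ∀ j, 1 ≤ j → j ≤ n →
      fS j (x j) - DoubleCentralizer.coe ℂ (k j (x j)) =
        fS (j-1) (x j) - DoubleCentralizer.coe ℂ (k (j-1) (x j)) := by
    intro j h1 h2
    have hkj : k j (x j) = s j := by
      by_cases hn : j = n
      · subst hn; exact hkxn h1
      · exact hk_lt j hn (x j)
    have hkj1 : k (j-1) (x j) = s (j-1) := hk_lt (j-1) (by omega) (x j)
    rw [hkj, hkj1]
    obtain ⟨m, rfl⟩ : ∃ m, j = m + 1 := ⟨j - 1, by omega⟩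
    simp only [Nat.add_sub_cancel]
    rw [hssucc m, Stmt5Proof.coe_add]
    have hDm := hD (m+1) h1 h2
    simp only [Nat.add_sub_cancel] at hDm
    rw [hDm]
    abel
  set f : ℝ → 𝓜(ℂ, B) := fun t => fS (idx t) t - DoubleCentralizer.coe ℂ (k (idx t) t)
    with hf_def
  have hagree : ∀ i ≤ n, ∀ t ∈ subInt c n x i,
      f t = fS i t - DoubleCentralizer.coe ℂ (k i t) := by
    intro i hi t ht
    have htc := hsubsub i hi ht
    have htj := hidxmem t htc
    rcases Nat.lt_trichotomy (idx t) i with h | h | h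
    · obtain ⟨hj1, hjt⟩ := hpair (idx t) i h hi t htj ht
      have hidxeq : idx t = i - 1 := by omega
      show fS (idx t) t - DoubleCentralizer.coe ℂ (k (idx t) t) = _
      rw [hidxeq, hjt]
      exact (hmatch i (by omega) hi).symm
    · show fS (idx t) t - DoubleCentralizer.coe ℂ (k (idx t) t) = _
      rw [h]
    · obtain ⟨hj1, hjt⟩ := hpair i (idx t) h (hidxle t) t ht htj
      show fS (idx t) t - DoubleCentralizer.coe ℂ (k (idx t) t) = _
      have hle := hidxle t
      rw [hj1] at hjt ⊢
      rw [hjt]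
      have hm := hmatch (i+1) (by omega) (by omega)
      simpa using hm
  have hcover : caseSet c ⊆ ⋃ i ∈ Set.Iic n, subInt c n x i := by
    intro t ht
    exact Set.mem_biUnion (hidxle t) (hidxmem t ht)
  have hsubclosed : ∀ i ≤ n, IsClosed (subInt c n x i) :=
    fun i _ => Stmt5Proof.subInt_closed c n x i
  have hstrict : StrictlyCtsOn f (caseSet c) := by
    intro b
    constructor
    · refine ContinuousOn.mono ?_ hcover
      refine Stmt5Proof.glue hsubclosed (fun i hi => ?_)
      have h1 : ContinuousOn (fun t => (fS i t - DoubleCentralizer.coe ℂ (k i t)) *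
          DoubleCentralizer.coe ℂ b) (subInt c n x i) := by
        simp only [sub_mul]
        exact (((hfS i hi).1 b).1).sub
          (((Stmt5Proof.coe_cont.comp (hkcont i)).mul continuous_const).continuousOn)
      exact h1.congr (fun t ht => by rw [hagree i hi t ht])
    · refine ContinuousOn.mono ?_ hcover
      refine Stmt5Proof.glue hsubclosed (fun i hi => ?_)
      have h1 : ContinuousOn (fun t => DoubleCentralizer.coe ℂ b *
          (fS i t - DoubleCentralizer.coe ℂ (k i t))) (subInt c n x i) := by
        simp only [mul_sub]
        exact (((hfS i hi).1 b).2).sub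
          ((continuous_const.mul (Stmt5Proof.coe_cont.comp (hkcont i))).continuousOn)
      exact h1.congr (fun t ht => by rw [hagree i hi t ht])
  set C0 : ℕ → ℝ := fun i => if h : i ≤ n then (hfS i h).2.choose else 0 with hC0_def
  have hC0 : ∀ i, ∀ h : i ≤ n, ∀ t ∈ subInt c n x i, ‖fS i t‖ ≤ C0 i := by
    intro i h t ht
    simp only [hC0_def, dif_pos h]
    exact (hfS i h).2.choose_spec t ht
  have hbound : ∃ C : ℝ, ∀ t ∈ caseSet c, ‖f t‖ ≤ C := by
    refine ⟨(∑ j ∈ Finset.range (n+1), max (C0 j) 0) + K, fun t ht => ?_⟩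
    have h1 : ‖f t‖ ≤ ‖fS (idx t) t‖ + ‖DoubleCentralizer.coe ℂ (k (idx t) t)‖ :=
      norm_sub_le _ _
    rw [Stmt5Proof.norm_coe] at h1
    have h2 := hC0 (idx t) (hidxle t) t (hidxmem t ht)
    have h4 : max (C0 (idx t)) 0 ≤ ∑ j ∈ Finset.range (n+1), max (C0 j) 0 :=
      Finset.single_le_sum (f := fun j => max (C0 j) 0) (fun j _ => le_max_right _ _)
        (Finset.mem_range.mpr (by have := hidxle t; omega))
    have h5 := hkK (idx t) (hidxle t) t
    have h6 : C0 (idx t) ≤ max (C0 (idx t)) 0 := le_max_left _ _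
    linarith
  have hf01 : c = SpaceCase.circle → f 0 = f 1 := by
    intro hc
    have hidx0 : idx 0 = 0 := by
      simp only [hidx_def]
      rw [Nat.findGreatest_eq_iff]
      refine ⟨Nat.zero_le n, fun h => absurd rfl h, fun j hj hjn => ?_⟩
      have h1 := (hxint j (by omega) hjn).1
      rw [hc] at h1
      simp only [leftEnd] at h1
      have h2 : (0:ℝ) < x j := by exact_mod_cast h1
      exact not_le.mpr h2
    have hidx1 : idx 1 = n := by
      rcases Nat.eq_zero_or_pos n with hn | hn
      · simp only [hidx_def, hn, Nat.findGreatest_zero]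
      · have hxn1 : x n ≤ 1 := by
          have h2 := (hxint n hn le_rfl).2
          rw [hc] at h2
          simp only [rightEnd] at h2
          exact le_of_lt (by exact_mod_cast h2)
        simp only [hidx_def]
        exact Nat.findGreatest_eq hxn1
    show fS (idx 0) 0 - _ = fS (idx 1) 1 - _
    rw [hidx0, hidx1, hk00 hc, hkn1 hc, Stmt5Proof.coe_zero, he hc]
    rw [sub_zero, sub_sub_cancel]
  have hcohf : ∀ i ≤ n, CoherentOn c n x f (fS i) i := by
    intro i hi
    refine ⟨fun t => -(k i t), ((hkcont i).neg).continuousOn, fun t ht => ?_, ?_, ?_⟩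
    · rw [hagree i hi t ht, Stmt5Proof.coe_neg]
      abel
    · rintro hc rfl
      have h1 := hkTop hc
      simpa using h1
    · rintro hc rfl
      have h0 := hk0line hc
      have heq : (fun t => ‖-(k 0 t)‖) = fun _ => (0:ℝ) := by
        funext t; rw [h0 t]; simp
      rw [heq]
      exact tendsto_const_nhds
  have hmemtop : (c = SpaceCase.halfLine ∨ c = SpaceCase.line) →
      ∀ᶠ t in atTop, t ∈ subInt c n x n := by
    intro hc
    rw [Filter.eventually_atTop]
    refine ⟨max 0 (x n), fun t ht => ⟨?_, ?_⟩⟩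
    · split_ifs with h0
      · rcases hc with h | h
        · rw [h]; simp only [leftEnd]
          exact_mod_cast le_trans (le_max_left _ _) ht
        · rw [h]; simp only [leftEnd]; exact bot_le
      · exact_mod_cast le_trans (le_max_right _ _) ht
    · rw [if_pos rfl]
      rcases hc with h | h <;> rw [h] <;> simp only [rightEnd] <;> exact le_top
  have hmembot : c = SpaceCase.line → ∀ᶠ t in atBot, t ∈ subInt c n x 0 := by
    intro hc
    rcases Nat.eq_zero_or_pos n with hn | hn
    · refine Filter.Eventually.of_forall (fun t => ⟨?_, ?_⟩)
      · rw [if_pos rfl, hc]; simp only [leftEnd]; exact bot_le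
      · rw [if_pos hn.symm, hc]; simp only [rightEnd]; exact le_top
    · rw [Filter.eventually_atBot]
      refine ⟨x 1, fun t ht => ⟨?_, ?_⟩⟩
      · rw [if_pos rfl, hc]; simp only [leftEnd]; exact bot_le
      · rw [if_neg (by omega : ¬ (0:ℕ) = n)]
        exact_mod_cast ht
  refine ⟨f, ⟨⟨hstrict, hbound, hf01⟩, hcohf⟩, ?_⟩
  intro g hg
  constructor
  · intro hcoh
    choose dgF hdgF using hcoh
    set dg : ℕ → ℝ → B := fun i => if h : i ≤ n then dgF i h else 0 with hdg_def
    have hdgprop : ∀ i, ∀ h : i ≤ n, ContinuousOn (dg i) (subInt c n x i) ∧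
        (∀ t ∈ subInt c n x i, g t - fS i t = DoubleCentralizer.coe ℂ (dg i t)) ∧
        ((c = SpaceCase.halfLine ∨ c = SpaceCase.line) → i = n →
          Filter.Tendsto (fun t => ‖dg i t‖) atTop (nhds 0)) ∧
        (c = SpaceCase.line → i = 0 →
          Filter.Tendsto (fun t => ‖dg i t‖) atBot (nhds 0)) := by
      intro i h
      simp only [hdg_def, dif_pos h]
      exact hdgF i h
    set DD : ℝ → B := fun t => -(k (idx t) t) - dg (idx t) t with hDD_def
    have hDDi : ∀ i ≤ n, ∀ t ∈ subInt c n x i,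
        DoubleCentralizer.coe ℂ (DD t) = f t - g t ∧ DD t = -(k i t) - dg i t := by
      intro i hi t ht
      have htc := hsubsub i hi ht
      have htm := hidxmem t htc
      have hj := hidxle t
      have e1 : DoubleCentralizer.coe ℂ (DD t) = f t - g t := by
        show DoubleCentralizer.coe ℂ (-(k (idx t) t) - dg (idx t) t) = _
        rw [Stmt5Proof.coe_sub, Stmt5Proof.coe_neg]
        have hfj : f t - fS (idx t) t = -(DoubleCentralizer.coe ℂ (k (idx t) t)) := by
          rw [hagree (idx t) hj t htm]; abel
        have hgj : g t - fS (idx t) t = DoubleCentralizer.coe ℂ (dg (idx t) t) :=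
          (hdgprop (idx t) hj).2.1 t htm
        have h3 : f t - g t = (f t - fS (idx t) t) - (g t - fS (idx t) t) := by abel
        rw [h3, hfj, hgj]
      refine ⟨e1, ?_⟩
      apply Stmt5Proof.coe_inj
      rw [e1, Stmt5Proof.coe_sub, Stmt5Proof.coe_neg]
      have hfi : f t - fS i t = -(DoubleCentralizer.coe ℂ (k i t)) := by
        rw [hagree i hi t ht]; abel
      have hgi : g t - fS i t = DoubleCentralizer.coe ℂ (dg i t) := (hdgprop i hi).2.1 t ht
      calc f t - g t = (f t - fS i t) - (g t - fS i t) := by abel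
        _ = _ := by rw [hfi, hgi]
    refine ⟨DD, ?_, fun t ht => (hDDi (idx t) (hidxle t) t (hidxmem t ht)).1.symm, ?_, ?_, ?_⟩
    · refine ContinuousOn.mono ?_ hcover
      refine Stmt5Proof.glue hsubclosed (fun i hi => ?_)
      have hcont : ContinuousOn (fun t => -(k i t) - dg i t) (subInt c n x i) :=
        ((hkcont i).neg.continuousOn).sub (hdgprop i hi).1
      exact hcont.congr (fun t ht => (hDDi i hi t ht).2)
    · intro hc
      have h0 : (0:ℝ) ∈ caseSet c := by rw [hc]; exact ⟨le_refl 0, zero_le_one⟩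
      have h1 : (1:ℝ) ∈ caseSet c := by rw [hc]; exact ⟨zero_le_one, le_refl 1⟩
      apply Stmt5Proof.coe_inj
      rw [(hDDi _ (hidxle 0) 0 (hidxmem 0 h0)).1, (hDDi _ (hidxle 1) 1 (hidxmem 1 h1)).1]
      rw [hf01 hc, hg.2.2 hc]
    · intro hc
      have hev := hmemtop (Or.inl hc)
      have htend : Filter.Tendsto (fun t => ‖-(k n t) - dg n t‖) atTop (nhds 0) := by
        have h1 := hkTop (Or.inl hc)
        have h2 := (hdgprop n le_rfl).2.2.1 (Or.inl hc) rfl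
        apply squeeze_zero (fun t => norm_nonneg _) (fun t => ?_) (by simpa using h1.add h2)
        calc ‖-(k n t) - dg n t‖ ≤ ‖-(k n t)‖ + ‖dg n t‖ := norm_sub_le _ _
          _ = ‖k n t‖ + ‖dg n t‖ := by rw [norm_neg]
      exact Filter.Tendsto.congr'
        (hev.mono (fun t ht => by simp only [(hDDi n le_rfl t ht).2])) htend
    · intro hc
      constructor
      · have hev := hmemtop (Or.inr hc)
        have htend : Filter.Tendsto (fun t => ‖-(k n t) - dg n t‖) atTop (nhds 0) := by
          have h1 := hkTop (Or.inr hc)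
          have h2 := (hdgprop n le_rfl).2.2.1 (Or.inr hc) rfl
          apply squeeze_zero (fun t => norm_nonneg _) (fun t => ?_) (by simpa using h1.add h2)
          calc ‖-(k n t) - dg n t‖ ≤ ‖-(k n t)‖ + ‖dg n t‖ := norm_sub_le _ _
            _ = ‖k n t‖ + ‖dg n t‖ := by rw [norm_neg]
        exact Filter.Tendsto.congr'
          (hev.mono (fun t ht => by simp only [(hDDi n le_rfl t ht).2])) htend
      · have hev := hmembot hc
        have htend : Filter.Tendsto (fun t => ‖-(k 0 t) - dg 0 t‖) atBot (nhds 0) := by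
          have heq : (fun t => ‖-(k 0 t) - dg 0 t‖) = fun t => ‖dg 0 t‖ := by
            funext t; rw [hk0line hc t]; simp
          rw [heq]
          exact (hdgprop 0 (Nat.zero_le n)).2.2.2 hc rfl
        exact Filter.Tendsto.congr'
          (hev.mono (fun t ht => by simp only [(hDDi 0 (Nat.zero_le n) t ht).2])) htend
  · intro hMI i hi
    obtain ⟨d, hdc, hde, hdci, hdh, hdl⟩ := hMI
    refine ⟨fun t => -(k i t) - d t,
      ((hkcont i).neg.continuousOn).sub (hdc.mono (hsubsub i hi)), fun t ht => ?_, ?_, ?_⟩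
    · rw [Stmt5Proof.coe_sub, Stmt5Proof.coe_neg]
      have h1 : f t - fS i t = -(DoubleCentralizer.coe ℂ (k i t)) := by
        rw [hagree i hi t ht]; abel
      have h2 : f t - g t = DoubleCentralizer.coe ℂ (d t) := hde t (hsubsub i hi ht)
      calc g t - fS i t = (f t - fS i t) - (f t - g t) := by abel
        _ = _ := by rw [h1, h2]
    · intro hc hieq
      rw [hieq]
      have h1 := hkTop hc
      have h2 : Filter.Tendsto (fun t => ‖d t‖) atTop (nhds 0) := by
        rcases hc with h | h
        · exact hdh h
        · exact (hdl h).1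
      apply squeeze_zero (fun t => norm_nonneg _) (fun t => ?_) (by simpa using h1.add h2)
      calc ‖-(k n t) - d t‖ ≤ ‖-(k n t)‖ + ‖d t‖ := norm_sub_le _ _
        _ = ‖k n t‖ + ‖d t‖ := by rw [norm_neg]
    · intro hc hieq
      rw [hieq]
      have heq : (fun t => ‖-(k 0 t) - d t‖) = fun t => ‖d t‖ := by
        funext t; rw [hk0line hc t]; simp
      rw [heq]
      exact (hdl hc).2
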